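/- For every radial function f ∈ C_0^1(ℝ²), every t ≥ 0, and λ ∈ {1,2}, there exists a universal constant C such that for all r > 0: r⟨t-r⟩^λ |f(r)|² ≤ C(‖⟨t-r⟩ ∂_r f‖²_{L²(ℝ²)} + ‖⟨t-r⟩^{λ-1} f‖²_{L²(ℝ²)}), where ⟨σ⟩ = √(1+σ²). -/

import Mathlib

open MeasureTheory

/-- `⟨σ⟩ = √(1+σ²)`. -/
noncomputable def jap (σ : ℝ) : ℝ := Real.sqrt (1 + σ ^ 2)

lemma jap_pos (σ : ℝ) : 0 < jap σ := Real.sqrt_pos.2 (by positivity)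

lemma one_le_jap (σ : ℝ) : 1 ≤ jap σ := by
  rw [jap]
  nlinarith [Real.sq_sqrt (show (0:ℝ) ≤ 1 + σ ^ 2 by positivity),
    Real.sqrt_nonneg (1 + σ ^ 2), sq_nonneg σ]

lemma abs_le_jap (σ : ℝ) : |σ| ≤ jap σ := by
  rw [jap, ← Real.sqrt_sq_eq_abs]
  exact Real.sqrt_le_sqrt (by nlinarith)

lemma hasDerivAt_jap (σ : ℝ) : HasDerivAt jap (σ / jap σ) σ := by
  have h1 : HasDerivAt (fun σ : ℝ => 1 + σ ^ 2) (2 * σ) σ := by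
    simpa using ((hasDerivAt_pow 2 σ).const_add 1)
  have h2 := (Real.hasDerivAt_sqrt (x := 1 + σ ^ 2) (by positivity)).comp σ h1
  convert h2 using 1
  case e'_9 => rw [jap]; field_simp
  all_goals rfl

lemma continuous_jap : Continuous jap :=
  Real.continuous_sqrt.comp (by continuity)

/-- algebraic core -/
lemma key_alg (a b G G' : ℝ) (ha : 1 ≤ a) (hb : |b| ≤ a) {l : ℕ} (hl : l = 1 ∨ l = 2) :
    |(l : ℝ) * a ^ (l-1) * (b / a * (-1)) * G ^ 2 + a ^ l * (2 * G ^ 1 * G')| ≤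
      (a * G') ^ 2 + 3 * (a ^ (l-1) * G) ^ 2 := by
  have ha0 : (0:ℝ) < a := lt_of_lt_of_le one_pos ha
  have hq : |b / a| ≤ 1 := by
    rw [abs_div, abs_of_pos ha0, div_le_one ha0]; exact hb
  obtain ⟨hq1, hq2⟩ := abs_le.mp hq
  rcases hl with rfl | rfl
  · simp only [pow_zero, pow_one, Nat.cast_one, one_mul]
    rw [abs_le]
    constructor <;>
      nlinarith [sq_nonneg (a * G' - G), sq_nonneg (a * G' + G),
        mul_nonneg (sub_nonneg.2 hq2) (sq_nonneg G),
        mul_nonneg (by linarith : (0:ℝ) ≤ 1 + b / a) (sq_nonneg G)]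
  · simp only [pow_one, Nat.cast_ofNat]
    rw [abs_le]
    constructor <;>
      nlinarith [sq_nonneg (a * G' - a * G), sq_nonneg (a * G' + a * G),
        mul_nonneg (mul_nonneg ha0.le (sub_nonneg.2 hq2)) (sq_nonneg G),
        mul_nonneg (mul_nonneg ha0.le (by linarith : (0:ℝ) ≤ 1 + b / a)) (sq_nonneg G),
        mul_nonneg (mul_nonneg (mul_nonneg ha0.le (sub_nonneg.2 ha)) (sub_nonneg.2 hq2)) (sq_nonneg G),
        mul_nonneg (mul_nonneg (mul_nonneg ha0.le (sub_nonneg.2 ha)) (by linarith : (0:ℝ) ≤ 1 + b / a)) (sq_nonneg G)]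

lemma oneD (g : ℝ → ℝ) (l : ℕ) (t : ℝ) (hl : l = 1 ∨ l = 2)
    (hg : ContDiff ℝ 1 g) (hsupp : HasCompactSupport g) (r : ℝ) (hr : 0 < r) :
    r * jap (t - r) ^ l * g r ^ 2 ≤
      ∫ y in Set.Ioi (0:ℝ), y * ((jap (t - y) * deriv g y) ^ 2 + 3 * (jap (t - y) ^ (l-1) * g y) ^ 2) := by
  have hgd : Differentiable ℝ g := hg.differentiable one_ne_zero
  have hgc : Continuous g := hg.continuous
  have hgdc : Continuous (deriv g) := hg.continuous_deriv le_rfl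
  set u : ℝ → ℝ := fun s => jap (t - s) ^ l * g s ^ 2 with hu_def
  set D : ℝ → ℝ := fun s =>
    (l : ℝ) * jap (t - s) ^ (l-1) * ((t - s) / jap (t - s) * (-1)) * g s ^ 2 +
      jap (t - s) ^ l * (2 * g s ^ 1 * deriv g s) with hD_def
  have hu : ∀ s, HasDerivAt u (D s) s := by
    intro s
    have h1 : HasDerivAt (fun s : ℝ => t - s) (-1) s := by
      simpa using (hasDerivAt_id s).const_sub t
    have h2 : HasDerivAt (fun s => jap (t - s)) ((t - s) / jap (t - s) * (-1)) s :=
      (hasDerivAt_jap (t - s)).comp s h1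
    have h3 := h2.pow l
    have h4 := ((hgd s).hasDerivAt).pow 2
    exact (h3.mul h4).congr_deriv (by simp only [hD_def]; norm_num)
  have hjc : Continuous (fun s : ℝ => jap (t - s)) :=
    continuous_jap.comp (continuous_const.sub continuous_id)
  have hqc : Continuous (fun s : ℝ => (t - s) / jap (t - s)) :=
    (continuous_const.sub continuous_id).div hjc fun s => (jap_pos _).ne'
  have hDc : Continuous D := by
    apply Continuous.add
    · exact ((continuous_const.mul (hjc.pow _)).mul (hqc.mul continuous_const)).mul (hgc.pow 2)
    · exact (hjc.pow _).mul ((continuous_const.mul (hgc.pow 1)).mul hgdc)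
  -- radius of support
  obtain ⟨R, hR⟩ := (Metric.isBounded_iff_subset_closedBall 0).1 hsupp.isBounded
  set M : ℝ := max (r + 1) (R + 1) with hM_def
  have hrM : r ≤ M := le_trans (by linarith) (le_max_left _ _)
  have hgM : g M = 0 := by
    apply image_eq_zero_of_notMem_tsupport
    intro hmem
    have := hR hmem
    simp only [Metric.mem_closedBall, dist_zero_right, Real.norm_eq_abs] at this
    have hM1 : R + 1 ≤ M := le_max_right _ _
    have : M ≤ R := le_trans (le_abs_self M) this
    linarith
  have hftc : ∫ s in r..M, D s = u M - u r :=
    intervalIntegral.integral_eq_sub_of_hasDerivAt (fun x _ => hu x)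
      (hDc.intervalIntegrable r M)
  have huM : u M = 0 := by simp [hu_def, hgM]
  have hur : u r = -∫ s in r..M, D s := by rw [hftc, huM]; ring
  -- bound function
  set bnd : ℝ → ℝ := fun s =>
    s * ((jap (t - s) * deriv g s) ^ 2 + 3 * (jap (t - s) ^ (l-1) * g s) ^ 2) with hbnd_def
  have hbnd_nonneg : ∀ s, 0 ≤ s → 0 ≤ bnd s := fun s hs => by positivity
  have hpoint : ∀ s ∈ Set.Icc r M, r * |D s| ≤ bnd s := by
    intro s hs
    have h1 : |D s| ≤ (jap (t - s) * deriv g s) ^ 2 + 3 * (jap (t - s) ^ (l-1) * g s) ^ 2 :=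
      key_alg (jap (t - s)) (t - s) (g s) (deriv g s) (one_le_jap _) (abs_le_jap _) hl
    have h2 : r ≤ s := hs.1
    have h3 : 0 ≤ |D s| := abs_nonneg _
    calc r * |D s| ≤ s * |D s| := mul_le_mul_of_nonneg_right h2 h3
    _ ≤ bnd s := mul_le_mul_of_nonneg_left h1 (le_trans hr.le h2)
  have hbndc : Continuous bnd := by
    apply continuous_id.mul
    exact ((hjc.mul hgdc).pow 2).add (continuous_const.mul (((hjc.pow _).mul hgc).pow 2))
  have hstep1 : r * u r ≤ ∫ s in r..M, bnd s := by
    rw [hur]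
    have h1 : r * -∫ s in r..M, D s ≤ r * |∫ s in r..M, D s| := by
      have := neg_abs_le (∫ s in r..M, D s)
      nlinarith [abs_nonneg (∫ s in r..M, D s)]
    have h2 : |∫ s in r..M, D s| ≤ ∫ s in r..M, |D s| :=
      intervalIntegral.abs_integral_le_integral_abs hrM
    have h3 : r * ∫ s in r..M, |D s| = ∫ s in r..M, r * |D s| := by
      rw [← intervalIntegral.integral_const_mul]
    have h4 : ∫ s in r..M, r * |D s| ≤ ∫ s in r..M, bnd s := by
      apply intervalIntegral.integral_mono_on hrM
      · exact (continuous_const.mul hDc.abs).intervalIntegrable r M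
      · exact hbndc.intervalIntegrable r M
      · exact hpoint
    have h5 : r * |∫ s in r..M, D s| ≤ r * ∫ s in r..M, |D s| :=
      mul_le_mul_of_nonneg_left h2 hr.le
    linarith
  obtain ⟨R', hR'⟩ := (Metric.isBounded_iff_subset_closedBall 0).1 hsupp.deriv.isBounded
  have hcs : HasCompactSupport bnd := by
    apply HasCompactSupport.intro (isCompact_closedBall (0:ℝ) (max R R'))
    intro x hx
    simp only [Metric.mem_closedBall, dist_zero_right, Real.norm_eq_abs, not_le] at hx
    have hg0 : g x = 0 := by
      apply image_eq_zero_of_notMem_tsupport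
      intro hmem
      have := hR hmem
      simp only [Metric.mem_closedBall, dist_zero_right, Real.norm_eq_abs] at this
      have := le_max_left R R'
      linarith
    have hd0 : deriv g x = 0 := by
      apply image_eq_zero_of_notMem_tsupport
      intro hmem
      have := hR' hmem
      simp only [Metric.mem_closedBall, dist_zero_right, Real.norm_eq_abs] at this
      have := le_max_right R R'
      linarith
    simp [hbnd_def, hg0, hd0]
  have hint : IntegrableOn bnd (Set.Ioi 0) :=
    (hbndc.integrable_of_hasCompactSupport hcs).integrableOn
  have hnn : 0 ≤ᵐ[volume.restrict (Set.Ioi 0)] bnd :=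
    (ae_restrict_iff' measurableSet_Ioi).2 (ae_of_all _ fun s hs => hbnd_nonneg s (le_of_lt hs))
  have hsub : Set.Ioc r M ⊆ Set.Ioi (0:ℝ) := fun s hs => lt_trans hr hs.1
  calc r * jap (t - r) ^ l * g r ^ 2 = r * u r := by simp only [hu_def]; ring
  _ ≤ ∫ s in r..M, bnd s := hstep1
  _ = ∫ s in Set.Ioc r M, bnd s := intervalIntegral.integral_of_le hrM
  _ ≤ ∫ s in Set.Ioi 0, bnd s := setIntegral_mono_set hint hnn hsub.eventuallyLE

/-- Lemma 3.1, second inequality: for radial `f(x) = g(|x|)` in `C_0^1(ℝ²)`, `t ≥ 0`,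
`λ ∈ {1,2}`:
`r ⟨t-r⟩^λ |f(r)|² ≤ C (‖⟨t-r⟩ ∂_r f‖²_{L²(ℝ²)} + ‖⟨t-r⟩^{λ-1} f‖²_{L²(ℝ²)})`. -/
theorem radial_weighted_decay_ghost :
    ∃ C : ℝ, 0 < C ∧
      ∀ (g : ℝ → ℝ) (l : ℕ) (t : ℝ), (l = 1 ∨ l = 2) → 0 ≤ t →
        ContDiff ℝ 1 g → HasCompactSupport g →
        ∀ r : ℝ, 0 < r →
          r * jap (t - r) ^ l * (g r) ^ 2 ≤
            C * ((∫ x : EuclideanSpace ℝ (Fin 2), (jap (t - ‖x‖) * deriv g ‖x‖) ^ 2) +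
                 ∫ x : EuclideanSpace ℝ (Fin 2), (jap (t - ‖x‖) ^ (l - 1) * g ‖x‖) ^ 2) := by
  set c := (volume (Metric.ball (0 : EuclideanSpace ℝ (Fin 2)) 1)).toReal with hc_def
  have hc : 0 < c :=
    ENNReal.toReal_pos (Metric.measure_ball_pos volume 0 one_pos).ne' measure_ball_lt_top.ne
  refine ⟨3 / (2 * c), by positivity, ?_⟩
  intro g l t hl ht hg hsupp r hr
  have hrad : ∀ f : ℝ → ℝ, (∫ x : EuclideanSpace ℝ (Fin 2), f ‖x‖) =
      2 * (c * ∫ y in Set.Ioi (0:ℝ), y * f y) := by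
    intro f
    have h := MeasureTheory.integral_fun_norm_addHaar
      (volume : Measure (EuclideanSpace ℝ (Fin 2))) f
    norm_num [finrank_euclideanSpace, Fintype.card_fin, smul_eq_mul, nsmul_eq_mul] at h
    rw [h, hc_def]; rfl
  set A : ℝ → ℝ := fun y => (jap (t - y) * deriv g y) ^ 2 with hA_def
  set B : ℝ → ℝ := fun y => (jap (t - y) ^ (l - 1) * g y) ^ 2 with hB_def
  have hjc : Continuous (fun s : ℝ => jap (t - s)) :=
    continuous_jap.comp (continuous_const.sub continuous_id)
  have hgc : Continuous g := hg.continuous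
  have hgdc : Continuous (deriv g) := hg.continuous_deriv le_rfl
  have hAc : Continuous (fun y => y * A y) :=
    continuous_id.mul ((hjc.mul hgdc).pow 2)
  have hBc : Continuous (fun y => y * B y) :=
    continuous_id.mul (((hjc.pow _).mul hgc).pow 2)
  have hAs : HasCompactSupport (fun y => y * A y) := by
    apply hsupp.deriv.mono
    intro y hy
    simp only [Function.mem_support, hA_def] at hy ⊢
    intro h; apply hy; simp [h]
  have hBs : HasCompactSupport (fun y => y * B y) := by
    apply hsupp.mono
    intro y hy
    simp only [Function.mem_support, hB_def] at hy ⊢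
    intro h; apply hy; simp [h]
  have hAint : IntegrableOn (fun y => y * A y) (Set.Ioi (0:ℝ)) :=
    (hAc.integrable_of_hasCompactSupport hAs).integrableOn
  have hBint : IntegrableOn (fun y => y * B y) (Set.Ioi (0:ℝ)) :=
    (hBc.integrable_of_hasCompactSupport hBs).integrableOn
  have hsplit : (∫ y in Set.Ioi (0:ℝ), y * (A y + 3 * B y)) =
      (∫ y in Set.Ioi (0:ℝ), y * A y) + 3 * ∫ y in Set.Ioi (0:ℝ), y * B y := by
    have he : (fun y => y * (A y + 3 * B y)) =
        fun y => (y * A y) + 3 * (y * B y) := funext fun y => by ring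
    rw [he, integral_add hAint (hBint.const_mul 3), integral_const_mul]
  have hX := hrad A
  have hY := hrad B
  have hXnn : 0 ≤ ∫ x : EuclideanSpace ℝ (Fin 2), A ‖x‖ :=
    integral_nonneg fun x => sq_nonneg _
  have hYnn : 0 ≤ ∫ x : EuclideanSpace ℝ (Fin 2), B ‖x‖ :=
    integral_nonneg fun x => sq_nonneg _
  have h1 := oneD g l t hl hg hsupp r hr
  have h2 : (∫ y in Set.Ioi (0:ℝ),
      y * ((jap (t - y) * deriv g y) ^ 2 + 3 * (jap (t - y) ^ (l-1) * g y) ^ 2)) =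
      (∫ y in Set.Ioi (0:ℝ), y * A y) + 3 * ∫ y in Set.Ioi (0:ℝ), y * B y := hsplit
  rw [h2] at h1
  have hXe : (∫ y in Set.Ioi (0:ℝ), y * A y) =
      (∫ x : EuclideanSpace ℝ (Fin 2), A ‖x‖) / (2 * c) := by
    rw [hX]; field_simp
  have hYe : (∫ y in Set.Ioi (0:ℝ), y * B y) =
      (∫ x : EuclideanSpace ℝ (Fin 2), B ‖x‖) / (2 * c) := by
    rw [hY]; field_simp
  rw [hXe, hYe] at h1
  calc r * jap (t - r) ^ l * g r ^ 2 ≤ _ := h1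
  _ ≤ 3 / (2 * c) * ((∫ x : EuclideanSpace ℝ (Fin 2), A ‖x‖) +
      ∫ x : EuclideanSpace ℝ (Fin 2), B ‖x‖) := by
    have e : 3 / (2 * c) * ((∫ x : EuclideanSpace ℝ (Fin 2), A ‖x‖) +
        ∫ x : EuclideanSpace ℝ (Fin 2), B ‖x‖) =
        (∫ x : EuclideanSpace ℝ (Fin 2), A ‖x‖) / (2 * c) +
        3 * ((∫ x : EuclideanSpace ℝ (Fin 2), B ‖x‖) / (2 * c)) +
        2 * (∫ x : EuclideanSpace ℝ (Fin 2), A ‖x‖) / (2 * c) := by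
      field_simp; ring
    rw [e]
    have : 0 ≤ 2 * (∫ x : EuclideanSpace ℝ (Fin 2), A ‖x‖) / (2 * c) :=
      div_nonneg (by linarith) (by positivity)
    linarith
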